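/- Let T : ℝⁿ → ℝⁿ be a Shapley operator and α ∈ ℝ. If the sub-eigenspace S_α(T) = { x ∈ ℝⁿ : T(x) ≥ α𝟙 + x } is nonempty, then liminf_{k→∞} T^k(0)/k ≥ α𝟙 (componentwise, where T^k denotes the k-th iterate). -/

import Mathlib

theorem stmt2 (n : ℕ) (T : (Fin n → ℝ) → (Fin n → ℝ))
    (hmono : Monotone T)
    (hadd : ∀ (x : Fin n → ℝ) (c : ℝ), T (x + c • (1 : Fin n → ℝ)) = T x + c • (1 : Fin n → ℝ))
    (α : ℝ) (hne : ∃ x : Fin n → ℝ, α • (1 : Fin n → ℝ) + x ≤ T x) :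
    ∀ i : Fin n, α ≤ Filter.atTop.liminf (fun k : ℕ => T^[k] 0 i / (k : ℝ)) := by
  intro i
  obtain ⟨x, hx⟩ := hne
  have hne' : (Finset.univ : Finset (Fin n)).Nonempty := ⟨i, Finset.mem_univ i⟩
  set M : ℝ := Finset.univ.sup' hne' x with hM
  have hxM : ∀ j, x j ≤ M := fun j => Finset.le_sup' x (Finset.mem_univ j)
  set B : ℝ := Finset.univ.sup' hne' (T 0) with hB
  have hTB : ∀ j, T 0 j ≤ B := fun j => Finset.le_sup' (T 0) (Finset.mem_univ j)
  -- iterates are additively homogeneous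
  have hiter_add : ∀ (k : ℕ) (y : Fin n → ℝ) (c : ℝ),
      T^[k] (y + c • (1 : Fin n → ℝ)) = T^[k] y + c • (1 : Fin n → ℝ) := by
    intro k
    induction k with
    | zero => intro y c; simp
    | succ k ih =>
      intro y c
      rw [Function.iterate_succ_apply, Function.iterate_succ_apply, hadd, ih]
  -- lower bound on iterates at x
  have hlow : ∀ k : ℕ, ((k : ℝ) * α) • (1 : Fin n → ℝ) + x ≤ T^[k] x := by
    intro k
    induction k with
    | zero => simp
    | succ k ih =>
      have h1 : T (((k : ℝ) * α) • (1 : Fin n → ℝ) + x) ≤ T^[k+1] x := by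
        rw [Function.iterate_succ_apply']
        exact hmono ih
      have h2 : T (((k : ℝ) * α) • (1 : Fin n → ℝ) + x)
          = T x + ((k : ℝ) * α) • (1 : Fin n → ℝ) := by
        rw [show ((k : ℝ) * α) • (1 : Fin n → ℝ) + x = x + ((k : ℝ) * α) • 1 by ring_nf,
          hadd]
      have h3 : α • (1 : Fin n → ℝ) + x + ((k : ℝ) * α) • (1 : Fin n → ℝ)
          ≤ T^[k+1] x := by
        refine le_trans ?_ h1
        rw [h2]
        intro j
        exact add_le_add_left (hx j) _
      refine le_trans (le_of_eq ?_) h3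
      push_cast
      funext j
      simp only [Pi.add_apply, Pi.smul_apply, Pi.one_apply, smul_eq_mul, mul_one]
      ring
  -- compare T^[k] 0 with T^[k] x
  have hcomp : ∀ k : ℕ, T^[k] x + (-M) • (1 : Fin n → ℝ) ≤ T^[k] 0 := by
    intro k
    have h0 : x + (-M) • (1 : Fin n → ℝ) ≤ 0 := by
      intro j
      simp only [Pi.add_apply, Pi.smul_apply, Pi.one_apply, Pi.zero_apply, smul_eq_mul,
        mul_one]
      linarith [hxM j]
    calc T^[k] x + (-M) • (1 : Fin n → ℝ) = T^[k] (x + (-M) • 1) := (hiter_add k x (-M)).symm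
      _ ≤ T^[k] 0 := hmono.iterate k h0
  have hkey : ∀ k : ℕ, (k : ℝ) * α + (x i - M) ≤ T^[k] 0 i := by
    intro k
    have h1 := hlow k i
    have h2 := hcomp k i
    simp only [Pi.add_apply, Pi.smul_apply, Pi.one_apply, smul_eq_mul, mul_one] at h1 h2
    linarith
  -- upper bound: T^[k] 0 ≤ k * B
  have hup : ∀ k : ℕ, T^[k] 0 ≤ ((k : ℝ) * B) • (1 : Fin n → ℝ) := by
    intro k
    induction k with
    | zero => simp
    | succ k ih =>
      have h1 : T 0 ≤ B • (1 : Fin n → ℝ) := by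
        intro j
        simpa using hTB j
      calc T^[k+1] 0 = T^[k] (T 0) := Function.iterate_succ_apply T k 0
        _ ≤ T^[k] (B • (1 : Fin n → ℝ)) := hmono.iterate k h1
        _ = T^[k] 0 + B • (1 : Fin n → ℝ) := by
            rw [show (B • (1 : Fin n → ℝ)) = 0 + B • 1 by simp, hiter_add]; simp
        _ ≤ ((k : ℝ) * B) • (1 : Fin n → ℝ) + B • 1 := fun j => add_le_add_left (ih j) _
        _ ≤ ((((k : ℕ) + 1 : ℕ) : ℝ) * B) • (1 : Fin n → ℝ) := by
            intro j
            push_cast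
            simp only [Pi.add_apply, Pi.smul_apply, Pi.one_apply, smul_eq_mul, mul_one]
            ring_nf
            exact le_refl _
  -- the sequence is bounded above, hence cobounded from below
  have hcob : Filter.atTop.IsCoboundedUnder (· ≥ ·)
      (fun k : ℕ => T^[k] 0 i / (k : ℝ)) := by
    refine Filter.isCoboundedUnder_ge_of_eventually_le Filter.atTop (x := |B|) ?_
    filter_upwards [Filter.eventually_ge_atTop 1] with k hk
    have hkpos : (0 : ℝ) < (k : ℝ) := by exact_mod_cast hk
    rw [div_le_iff₀ hkpos]
    calc T^[k] 0 i ≤ (k : ℝ) * B := by simpa using hup k i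
      _ ≤ |B| * (k : ℝ) := by
          rw [mul_comm]
          exact mul_le_mul_of_nonneg_right (le_abs_self B) hkpos.le
  -- conclude
  refine le_of_forall_lt_imp_le_of_dense fun b hb => ?_
  set c : ℝ := x i - M with hc
  have hg : Filter.Tendsto (fun k : ℕ => α + c / (k : ℝ)) Filter.atTop (nhds α) := by
    have := (tendsto_const_nhds (x := α) (f := (Filter.atTop : Filter ℕ))).add
      (tendsto_const_div_atTop_nhds_zero_nat c)
    simpa using this
  refine Filter.le_liminf_of_le hcob ?_
  filter_upwards [Filter.eventually_ge_atTop 1, hg.eventually (eventually_ge_nhds hb)]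
    with k hk hgk
  have hkpos : (0 : ℝ) < (k : ℝ) := by exact_mod_cast hk
  calc b ≤ α + c / (k : ℝ) := hgk
    _ = ((k : ℝ) * α + c) / (k : ℝ) := by field_simp
    _ ≤ T^[k] 0 i / (k : ℝ) := by gcongr; exact hkey k
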